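/- Let V be a finite nonempty index set, L a finite nonempty label type, 𝓡 a region family covering V with potentials θ_r : Y_r → ℝ, and ε > 0. Let a_r : Y_r → ℝ (r ∈ 𝓡) be any adjustment functions satisfying ∑_{r∈𝓡} a_r(y|_r) = 0 for every joint label y : V → L. Then ε·log( ∑_{y : V → L} exp( (∑_{r∈𝓡} θ_r(y|_r)) / ε ) ) ≤ ∑_{r∈𝓡} ε·log( ∑_{z ∈ Y_r} exp( (θ_r(z) + a_r(z)) / ε ) ). In particular, the extended log-loss over joint labels is upper bounded by the sum of the low-dimensional region losses for any reparametrization whose adjustments telescope to zero. -/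

import Mathlib

set_option maxHeartbeats 1000000

lemma sum_prod_le_prod_sum {V L : Type*} [Fintype V] [DecidableEq V] [Fintype L]
    (𝓡 : Finset (Finset V)) (hcover : ∀ i : V, ∃ r ∈ 𝓡, i ∈ r)
    (g : (r : Finset V) → (↥r → L) → ℝ) (hg : ∀ r z, 0 ≤ g r z) :
    (∑ y : V → L, ∏ r ∈ 𝓡, g r (fun i => y i)) ≤ ∏ r ∈ 𝓡, ∑ z : ↥r → L, g r z := by
  classical
  set Φ : (V → L) → ((r : Finset V) → r ∈ 𝓡 → (↥r → L)) :=
    fun y r _ => fun i => y i with hΦ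
  have hΦinj : Function.Injective Φ := by
    intro y y' h
    funext i
    obtain ⟨r, hr, hir⟩ := hcover i
    have := congrFun (congrFun (congrFun h r) hr) ⟨i, hir⟩
    simpa [hΦ] using this
  have hmem : ∀ y : V → L,
      Φ y ∈ 𝓡.pi (fun r => (Finset.univ : Finset (↥r → L))) := by
    intro y
    rw [Finset.mem_pi]
    intro r hr
    exact Finset.mem_univ _
  have h1 : (∑ y : V → L, ∏ r ∈ 𝓡, g r (fun i => y i))
      = ∑ y : V → L, ∏ x ∈ 𝓡.attach, g x.1 (Φ y x.1 x.2) := by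
    refine Finset.sum_congr rfl fun y _ => ?_
    rw [← Finset.prod_attach 𝓡 (fun r => g r (fun i => y i))]
  have h2 : (∑ y : V → L, ∏ x ∈ 𝓡.attach, g x.1 (Φ y x.1 x.2))
      = ∑ p ∈ Finset.univ.image Φ, ∏ x ∈ 𝓡.attach, g x.1 (p x.1 x.2) := by
    rw [Finset.sum_image (fun y _ y' _ h => hΦinj h)]
  have h3 : (∑ p ∈ Finset.univ.image Φ, ∏ x ∈ 𝓡.attach, g x.1 (p x.1 x.2))
      ≤ ∑ p ∈ 𝓡.pi (fun r => (Finset.univ : Finset (↥r → L))),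
          ∏ x ∈ 𝓡.attach, g x.1 (p x.1 x.2) := by
    refine Finset.sum_le_sum_of_subset_of_nonneg ?_ ?_
    · intro p hp
      obtain ⟨y, _, rfl⟩ := Finset.mem_image.mp hp
      exact hmem y
    · intro p _ _
      exact Finset.prod_nonneg fun x _ => hg x.1 _
  have h4 : (∑ p ∈ 𝓡.pi (fun r => (Finset.univ : Finset (↥r → L))),
      ∏ x ∈ 𝓡.attach, g x.1 (p x.1 x.2)) = ∏ r ∈ 𝓡, ∑ z : ↥r → L, g r z :=
    (Finset.prod_sum _ _ _).symm
  linarith [h1, h2, h3, h4]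

/-- For a region family `𝓡` covering `V`, potentials `θ_r`, `ε > 0`,
and adjustments `a_r` telescoping to zero on every joint label, the extended log-loss
over joint labels is upper bounded by the sum of the low-dimensional region losses:
`ε·log(∑_y exp((∑_r θ_r(y|_r))/ε)) ≤ ∑_r ε·log(∑_{z ∈ Y_r} exp((θ_r(z)+a_r(z))/ε))`. -/
theorem region_decomposed_softmax_bound {V L : Type*} [Fintype V] [Nonempty V] [DecidableEq V]
    [Fintype L] [Nonempty L]
    (𝓡 : Finset (Finset V)) (hcover : ∀ i : V, ∃ r ∈ 𝓡, i ∈ r)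
    (θ : (r : Finset V) → (↥r → L) → ℝ)
    (ε : ℝ) (hε : 0 < ε)
    (a : (r : Finset V) → (↥r → L) → ℝ)
    (ha : ∀ y : V → L, ∑ r ∈ 𝓡, a r (fun i => y i) = 0) :
    ε * Real.log (∑ y : V → L, Real.exp ((∑ r ∈ 𝓡, θ r (fun i => y i)) / ε)) ≤
      ∑ r ∈ 𝓡, ε * Real.log (∑ z : ↥r → L, Real.exp ((θ r z + a r z) / ε)) := by
  classical
  set g : (r : Finset V) → (↥r → L) → ℝ := fun r z => Real.exp ((θ r z + a r z) / ε) with hg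
  have hgpos : ∀ (r : Finset V) (z : ↥r → L), 0 < g r z := fun r z => Real.exp_pos _
  have hYpos : ∀ r ∈ 𝓡, 0 < ∑ z : ↥r → L, g r z := by
    intro r _
    exact Finset.sum_pos (fun z _ => hgpos r z) Finset.univ_nonempty
  have hjoint : ∀ y : V → L,
      Real.exp ((∑ r ∈ 𝓡, θ r (fun i => y i)) / ε) = ∏ r ∈ 𝓡, g r (fun i => y i) := by
    intro y
    have h1 : (∑ r ∈ 𝓡, θ r (fun i => y i))
        = ∑ r ∈ 𝓡, (θ r (fun i => y i) + a r (fun i => y i)) := by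
      rw [Finset.sum_add_distrib, ha y, add_zero]
    rw [h1, Finset.sum_div, Real.exp_sum]
  have key : (∑ y : V → L, ∏ r ∈ 𝓡, g r (fun i => y i)) ≤ ∏ r ∈ 𝓡, ∑ z : ↥r → L, g r z :=
    sum_prod_le_prod_sum 𝓡 hcover g (fun r z => (hgpos r z).le)
  have hZpos : 0 < ∑ y : V → L, Real.exp ((∑ r ∈ 𝓡, θ r (fun i => y i)) / ε) :=
    Finset.sum_pos (fun y _ => Real.exp_pos _) Finset.univ_nonempty
  have hlog : Real.log (∑ y : V → L, Real.exp ((∑ r ∈ 𝓡, θ r (fun i => y i)) / ε))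
      ≤ ∑ r ∈ 𝓡, Real.log (∑ z : ↥r → L, g r z) := by
    rw [← Real.log_prod (f := fun (r : Finset V) => ∑ z : ↥r → L, g r z) (fun r hr => (hYpos r hr).ne')]
    apply Real.log_le_log hZpos
    calc (∑ y : V → L, Real.exp ((∑ r ∈ 𝓡, θ r (fun i => y i)) / ε))
        = ∑ y : V → L, ∏ r ∈ 𝓡, g r (fun i => y i) :=
          Finset.sum_congr rfl fun y _ => hjoint y
      _ ≤ _ := key
  calc ε * Real.log (∑ y : V → L, Real.exp ((∑ r ∈ 𝓡, θ r (fun i => y i)) / ε))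
      ≤ ε * ∑ r ∈ 𝓡, Real.log (∑ z : ↥r → L, g r z) :=
        mul_le_mul_of_nonneg_left hlog hε.le
    _ = ∑ r ∈ 𝓡, ε * Real.log (∑ z : ↥r → L, Real.exp ((θ r z + a r z) / ε)) := by
        rw [Finset.mul_sum]
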